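/- Let π = {V_i}, σ = {W_j}, τ = {X_k} be three direct-sum decompositions of a finite-dimensional vector space V that are pairwise compatible (i.e., for each pair, the nonzero pairwise intersections of their subspaces form a DSD of V). Then the join π ∨ σ = {V_i ∩ W_j : V_i ∩ W_j ≠ 0} is compatible with τ; equivalently, the nonzero triple intersections V_i ∩ W_j ∩ X_k form a direct-sum decomposition of V. -/

import Mathlib

open Module Submodule

section aux
variable {K V : Type*} [Field K] [AddCommGroup V] [Module K V] [FiniteDimensional K V]



lemma aux_sum_finrank {ι : Type*} [Fintype ι] [DecidableEq ι] {A : ι → Submodule K V}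
    (h : DirectSum.IsInternal A) :
    ∑ i, finrank K ↥(A i) = finrank K V := by
  rw [← (LinearEquiv.ofBijective (DirectSum.coeLinearMap A) h).finrank_eq,
    finrank_directSum]

lemma aux_finrank_iSup {ι : Type*} [Fintype ι] [DecidableEq ι] {A : ι → Submodule K V}
    (h : iSupIndep A) :
    finrank K ↥(⨆ i, A i) = ∑ i, finrank K ↥(A i) := by
  have h' : iSupIndep fun i : (Set.univ : Set ι) => A ↑i := h.comp Subtype.val_injective
  have hint := DirectSum.isInternal_biSup_submodule_of_iSupIndep Set.univ h'
  have hsum := aux_sum_finrank hint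
  have hle : ∀ i : (Set.univ : Set ι), A ↑i ≤ ⨆ i ∈ Set.univ, A i :=
    fun i => le_biSup A i.2
  have heq : ∀ i : (Set.univ : Set ι),
      finrank K ↥((A ↑i).comap (⨆ i ∈ Set.univ, A i).subtype) = finrank K ↥(A ↑i) :=
    fun i => (Submodule.comapSubtypeEquivOfLe (hle i)).finrank_eq
  rw [Fintype.sum_congr _ _ heq] at hsum
  rw [show (⨆ i, A i) = ⨆ i ∈ Set.univ, A i by simp, ← hsum]
  exact (Fintype.sum_equiv (Equiv.Set.univ ι).symm _ _ (fun i => rfl)).symm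




lemma aux_chase {L : Type*} [DecidableEq L] {X : L → Submodule K V} (hX : iSupIndep X)
    (S T : Submodule K V) :
    (⨆ l, S ⊓ X l) ⊓ (⨆ l, T ⊓ X l) ≤ ⨆ l, S ⊓ T ⊓ X l := by
  intro v hv
  have hv1 : v ∈ ⨆ l, S ⊓ X l := hv.1
  have hv2 : v ∈ ⨆ l, T ⊓ X l := hv.2
  rw [Submodule.mem_iSup_iff_exists_dfinsupp] at hv1 hv2
  obtain ⟨f, hf⟩ := hv1
  obtain ⟨g, hg⟩ := hv2
  let F : Π₀ l, ↥(X l) :=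
    DFinsupp.mapRange (fun l => Submodule.inclusion (inf_le_right : S ⊓ X l ≤ X l))
      (fun l => map_zero _) f
  let G : Π₀ l, ↥(X l) :=
    DFinsupp.mapRange (fun l => Submodule.inclusion (inf_le_right : T ⊓ X l ≤ X l))
      (fun l => map_zero _) g
  have hF : (DFinsupp.lsum ℕ fun l => (X l).subtype) F = v := by
    classical
    rw [← hf]
    simp only [DFinsupp.lsum_apply_apply, DFinsupp.sumAddHom_apply, F]
    rw [DFinsupp.sum_mapRange_index (by intro; rfl)]
    rfl
  have hG : (DFinsupp.lsum ℕ fun l => (X l).subtype) G = v := by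
    classical
    rw [← hg]
    simp only [DFinsupp.lsum_apply_apply, DFinsupp.sumAddHom_apply, G]
    rw [DFinsupp.sum_mapRange_index (by intro; rfl)]
    rfl
  have hFG : F = G := hX.dfinsupp_lsum_injective (hF.trans hG.symm)
  rw [← hf]
  classical
  rw [DFinsupp.lsum_apply_apply, DFinsupp.sumAddHom_apply]
  refine Submodule.sum_mem _ fun l _ => Submodule.mem_iSup_of_mem l ?_
  have hfg : ((f l : V)) = (g l : V) := by
    have h' : (F l : V) = (G l : V) := by rw [hFG]
    exact h'
  have hT : ((f l : V)) ∈ T := hfg ▸ (g l).2.1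
  exact ⟨⟨(f l).2.1, hT⟩, (f l).2.2⟩

lemma aux_indep_prod {α β : Type*} {A : α → Submodule K V} {B : α → β → Submodule K V}
    (hA : iSupIndep A) (hB : ∀ a, iSupIndep (B a)) (hle : ∀ a b, B a b ≤ A a) :
    iSupIndep (fun p : α × β => B p.1 p.2) := by
  rintro ⟨a, b⟩
  have hsub : (⨆ (q : α × β) (_ : q ≠ (a, b)), B q.1 q.2) ≤
      (⨆ (b' : β) (_ : b' ≠ b), B a b') ⊔ (⨆ (a' : α) (_ : a' ≠ a), A a') := by
    refine iSup₂_le fun q hq => ?_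
    rcases eq_or_ne q.1 a with h1 | h1
    · have hb' : q.2 ≠ b := fun h => hq (Prod.ext h1 h)
      refine le_sup_of_le_left ?_
      have : B q.1 q.2 = B a q.2 := by rw [h1]
      rw [this]
      exact le_iSup₂ (f := fun b' (_ : b' ≠ b) => B a b') q.2 hb'
    · exact le_sup_of_le_right
        (le_trans (hle q.1 q.2) (le_iSup₂ (f := fun a' (_ : a' ≠ a) => A a') q.1 h1))
  refine Disjoint.mono_right hsub ?_
  have hY : Disjoint (A a) (⨆ (a' : α) (_ : a' ≠ a), A a') := hA a
  have hZ : Disjoint (B a b) (⨆ (b' : β) (_ : b' ≠ b), B a b') := hB a b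
  have hZle : (⨆ (b' : β) (_ : b' ≠ b), B a b') ≤ A a := iSup₂_le fun b' _ => hle a b'
  rw [disjoint_iff]
  rw [disjoint_iff] at hY hZ
  refine le_bot_iff.mp ?_
  calc B a b ⊓ ((⨆ (b') (_ : b' ≠ b), B a b') ⊔ (⨆ (a') (_ : a' ≠ a), A a'))
      ≤ B a b ⊓ (A a ⊓ ((⨆ (b') (_ : b' ≠ b), B a b') ⊔ (⨆ (a') (_ : a' ≠ a), A a'))) :=
        le_inf inf_le_left (le_inf (le_trans inf_le_left (hle a b)) inf_le_right)
    _ = B a b ⊓ (((⨆ (b') (_ : b' ≠ b), B a b') ⊔ (⨆ (a') (_ : a' ≠ a), A a')) ⊓ A a) := by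
        rw [inf_comm (A a)]
    _ = B a b ⊓ ((⨆ (b') (_ : b' ≠ b), B a b') ⊔ ((⨆ (a') (_ : a' ≠ a), A a') ⊓ A a)) := by
        rw [sup_inf_assoc_of_le _ hZle]
    _ = B a b ⊓ (⨆ (b') (_ : b' ≠ b), B a b') := by rw [inf_comm _ (A a), hY, sup_bot_eq]
    _ = ⊥ := hZ

lemma aux_restrict {A L : Type*} [Fintype A] [Fintype L] [DecidableEq A] [DecidableEq L]
    {Y : A → Submodule K V} {X : L → Submodule K V}
    (hY : DirectSum.IsInternal Y)
    (hP : DirectSum.IsInternal (fun p : A × L => Y p.1 ⊓ X p.2)) (a : A) :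
    ⨆ l, Y a ⊓ X l = Y a := by
  have hindep : ∀ a : A, iSupIndep (fun l => Y a ⊓ X l) := fun a =>
    hP.submodule_iSupIndep.comp (f := fun l => (a, l))
      (fun l l' h => congrArg Prod.snd h)
  have hd : ∀ a : A, finrank K ↥(⨆ l, Y a ⊓ X l) = ∑ l, finrank K ↥(Y a ⊓ X l) :=
    fun a => aux_finrank_iSup (hindep a)
  have hle : ∀ a : A, (⨆ l, Y a ⊓ X l) ≤ Y a := fun a => iSup_le fun l => inf_le_left
  have hle' : ∀ a : A, ∑ l, finrank K ↥(Y a ⊓ X l) ≤ finrank K ↥(Y a) := fun a => by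
    rw [← hd a]; exact Submodule.finrank_mono (hle a)
  have hsum : ∑ a : A, ∑ l, finrank K ↥(Y a ⊓ X l) = ∑ a : A, finrank K ↥(Y a) := by
    rw [show (∑ a : A, ∑ l, finrank K ↥(Y a ⊓ X l))
        = ∑ p : A × L, finrank K ↥(Y p.1 ⊓ X p.2) from (Fintype.sum_prod_type (f := fun p : A × L => finrank K ↥(Y p.1 ⊓ X p.2))).symm,
      aux_sum_finrank hP, aux_sum_finrank hY]
  have key : ∀ a ∈ Finset.univ, ∑ l, finrank K ↥(Y a ⊓ X l) = finrank K ↥(Y a) :=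
    (Finset.sum_eq_sum_iff_of_le (fun a _ => hle' a)).mp hsum
  exact Submodule.eq_of_le_of_finrank_le (hle a)
    (le_of_eq (by rw [hd a, key a (Finset.mem_univ a)]))


end aux

/-- If three DSDs π = {V_i}, σ = {W_j}, τ = {X_k} of a
finite-dimensional vector space are pairwise compatible (the pairwise
intersections form DSDs), then the join π ∨ σ is compatible with τ:
the triple intersections V_i ⊓ W_j ⊓ X_k form a DSD of V. -/
theorem stmt1 {K V : Type*} [Field K] [AddCommGroup V] [Module K V]
    [FiniteDimensional K V]
    {I J L : Type*} [DecidableEq I] [DecidableEq J] [DecidableEq L]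
    (Vf : I → Submodule K V) (Wf : J → Submodule K V) (Xf : L → Submodule K V)
    (hVne : ∀ i, Vf i ≠ ⊥) (hWne : ∀ j, Wf j ≠ ⊥) (hXne : ∀ l, Xf l ≠ ⊥)
    (hπ : DirectSum.IsInternal Vf) (hσ : DirectSum.IsInternal Wf)
    (hτ : DirectSum.IsInternal Xf)
    (hπσ : DirectSum.IsInternal (fun p : I × J => Vf p.1 ⊓ Wf p.2))
    (hπτ : DirectSum.IsInternal (fun p : I × L => Vf p.1 ⊓ Xf p.2))
    (hστ : DirectSum.IsInternal (fun p : J × L => Wf p.1 ⊓ Xf p.2)) :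
    DirectSum.IsInternal (fun p : I × J × L => Vf p.1 ⊓ Wf p.2.1 ⊓ Xf p.2.2) := by
  have hfI : Finite I := WellFoundedGT.finite_of_iSupIndep hπ.submodule_iSupIndep hVne
  have hfJ : Finite J := WellFoundedGT.finite_of_iSupIndep hσ.submodule_iSupIndep hWne
  have hfL : Finite L := WellFoundedGT.finite_of_iSupIndep hτ.submodule_iSupIndep hXne
  cases nonempty_fintype I
  cases nonempty_fintype J
  cases nonempty_fintype L
  have h1 : ∀ i, (⨆ l, Vf i ⊓ Xf l) = Vf i := aux_restrict hπ hπτ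
  have h2 : ∀ j, (⨆ l, Wf j ⊓ Xf l) = Wf j := aux_restrict hσ hστ
  apply DirectSum.isInternal_submodule_of_iSupIndep_of_iSup_eq_top
  · have hbig : iSupIndep (fun q : (I × J) × L => Vf q.1.1 ⊓ Wf q.1.2 ⊓ Xf q.2) :=
      aux_indep_prod (A := fun p : I × J => Vf p.1 ⊓ Wf p.2)
        (B := fun p l => Vf p.1 ⊓ Wf p.2 ⊓ Xf l)
        hπσ.submodule_iSupIndep
        (fun p => hτ.submodule_iSupIndep.mono (fun l => inf_le_right))
        (fun p l => inf_le_left)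
    exact hbig.comp (Equiv.prodAssoc I J L).symm.injective
  · rw [← top_le_iff, ← hπσ.submodule_iSup_eq_top]
    refine iSup_le ?_
    rintro ⟨i, j⟩
    calc Vf i ⊓ Wf j = (⨆ l, Vf i ⊓ Xf l) ⊓ (⨆ l, Wf j ⊓ Xf l) := by rw [h1 i, h2 j]
      _ ≤ ⨆ l, Vf i ⊓ Wf j ⊓ Xf l := aux_chase hτ.submodule_iSupIndep _ _
      _ ≤ ⨆ p : I × J × L, Vf p.1 ⊓ Wf p.2.1 ⊓ Xf p.2.2 :=
          iSup_le fun l =>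
            le_iSup (fun p : I × J × L => Vf p.1 ⊓ Wf p.2.1 ⊓ Xf p.2.2) (i, j, l)
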